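/- Let T = (L, R, τ, σ) be a rewrite rule and m : L → G a matching with respect to T. Let (ℋ, τ₁ : |G| → ℋ, δ : |R| → ℋ) be the pushout of τ : |L| → |R| and |m| : |L| → |G| in the category of sets. Set Γ = |G| − |m(L)|, Σ = dom(σ) and Δ = |R| − Σ. Then ℋ is the disjoint union of τ₁(Γ), δ(Δ) and δ(Σ); the restriction of τ₁ to a map Γ → τ₁(Γ) is bijective; and the restriction of δ to a map Δ → δ(Δ) is bijective. -/

import Mathlib

/-!
Termgraphs over a signature `Ω` with arity function `ar`.
A termgraph has a type of nodes `N`; a node `n` is *labeled* when `label n = some ω`,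
and then its successor string `succ n` has length `ar ω`; unlabeled nodes have an
empty successor string (the successor function is only meaningful on labeled nodes).
-/

universe u

structure TermGraph (Ω : Type u) (ar : Ω → ℕ) : Type (u + 1) where
  N : Type u
  label : N → Option Ω
  succ : N → List N
  arity_eq : ∀ n : N, (succ n).length = ((label n).map ar).getD 0

namespace TermGraph

variable {Ω : Type u} {ar : Ω → ℕ}

/-- A graph morphism: preserves labeled nodes, labels and successors. -/
structure Hom (G H : TermGraph Ω ar) : Type u where
  toFun : G.N → H.N
  label_eq : ∀ (n : G.N) (ω : Ω), G.label n = some ω → H.label (toFun n) = some ω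
  succ_eq : ∀ (n : G.N) (ω : Ω), G.label n = some ω →
    H.succ (toFun n) = (G.succ n).map toFun

/-- `γ` is graphic at `n`: either `n` is unlabeled, or both `n` and `γ n` are labeled
with the same label and corresponding successors. -/
def GraphicAt (G H : TermGraph Ω ar) (γ : G.N → H.N) (n : G.N) : Prop :=
  ∀ ω : Ω, G.label n = some ω →
    H.label (γ n) = some ω ∧ H.succ (γ n) = (G.succ n).map γ

/-- `γ` is strictly graphic at `n`: either both `n` and `γ n` are unlabeled, or both
are labeled with the same label and corresponding successors.  (When both are
unlabeled both successor strings are empty, so the successor condition is harmless.) -/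
def StrictGraphicAt (G H : TermGraph Ω ar) (γ : G.N → H.N) (n : G.N) : Prop :=
  H.label (γ n) = G.label n ∧ H.succ (γ n) = (G.succ n).map γ

def GraphicOn (G H : TermGraph Ω ar) (γ : G.N → H.N) (Γ : Set G.N) : Prop :=
  ∀ n ∈ Γ, GraphicAt G H γ n

def StrictGraphicOn (G H : TermGraph Ω ar) (γ : G.N → H.N) (Γ : Set G.N) : Prop :=
  ∀ n ∈ Γ, StrictGraphicAt G H γ n

/-- `p ∈ |H|` is a `τ`-clone of `q ∈ |G|` (for `τ : |G| → |H|`): `p` is labeled iff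
`q` is labeled, and then they carry the same label and `𝓢_H p = τ*(𝓢_G q)`. -/
def IsClone (G H : TermGraph Ω ar) (τ : G.N → H.N) (p : H.N) (q : G.N) : Prop :=
  H.label p = G.label q ∧ H.succ p = (G.succ q).map τ

end TermGraph

open TermGraph

/-- `(P, τ₁, δ)` is a pushout of `τ : L → R` and `m : L → G` in the category of sets:
the square commutes and it satisfies the universal property of pushouts. -/
def IsSetPushout {L R G P : Type u} (τ : L → R) (m : L → G)
    (τ₁ : G → P) (δ : R → P) : Prop :=
  τ₁ ∘ m = δ ∘ τ ∧
  ∀ (P' : Type u) (τ₁' : G → P') (δ' : R → P'), τ₁' ∘ m = δ' ∘ τ →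
    ∃! η : P → P', η ∘ τ₁ = τ₁' ∧ η ∘ δ = δ'

/-- A rewrite rule `(L, R, τ, σ)`: `τ : |L| → |R|` is a total function and
`σ : |R| ⇀ |L|` is a partial function (encoded via `Option`) such that each node
in the domain of `σ` is unlabeled or is a `τ`-clone of its `σ`-image. -/
structure Rule (Ω : Type u) (ar : Ω → ℕ) : Type (u + 1) where
  L : TermGraph Ω ar
  R : TermGraph Ω ar
  τ : L.N → R.N
  σ : R.N → Option L.N
  σ_cond : ∀ (n : R.N) (q : L.N), σ n = some q →
    R.label n = none ∨ IsClone L R τ n q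

/-- A matching with respect to a rewrite rule `T`: a graph morphism `m : L → G` such
that whenever `m p = m p'` for distinct nodes `p, p'` of `L`, then `τ p` and `τ p'`
are in the domain of `σ` and `σ (τ p) = σ (τ p')`. -/
def IsMatching {Ω : Type u} {ar : Ω → ℕ} (T : Rule Ω ar) (G : TermGraph Ω ar)
    (m : TermGraph.Hom T.L G) : Prop :=
  ∀ p p' : T.L.N, p ≠ p' → m.toFun p = m.toFun p' →
    (T.σ (T.τ p)).isSome ∧ (T.σ (T.τ p')).isSome ∧ T.σ (T.τ p) = T.σ (T.τ p')

/-- Decomposition of the pushout of `τ` and `|m|` in the category of sets, for a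
matching `m` with respect to the rewrite rule `T`.  With `Γ = |G| − |m(L)|`,
`Σ = dom σ` and `Δ = |R| − Σ`: the pushout object is the disjoint union of
`τ₁(Γ)`, `δ(Δ)` and `δ(Σ)`, the restriction of `τ₁` to `Γ` is injective (hence
bijective onto its image) and the restriction of `δ` to `Δ` is injective (hence
bijective onto its image). -/
theorem set_pushout_decomposition {Ω : Type u} {ar : Ω → ℕ} (T : Rule Ω ar)
    (G : TermGraph Ω ar) (m : TermGraph.Hom T.L G) (hm : IsMatching T G m)
    {ℋ : Type u} (τ₁ : G.N → ℋ) (δ : T.R.N → ℋ)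
    (hpo : IsSetPushout T.τ m.toFun τ₁ δ) :
    (τ₁ '' (Set.range m.toFun)ᶜ ∪ δ '' {n | ¬ (T.σ n).isSome} ∪
        δ '' {n | (T.σ n).isSome} = Set.univ) ∧
    (τ₁ '' (Set.range m.toFun)ᶜ ∩ δ '' {n | ¬ (T.σ n).isSome} = ∅) ∧
    (τ₁ '' (Set.range m.toFun)ᶜ ∩ δ '' {n | (T.σ n).isSome} = ∅) ∧
    (δ '' {n | ¬ (T.σ n).isSome} ∩ δ '' {n | (T.σ n).isSome} = ∅) ∧
    Set.InjOn τ₁ ((Set.range m.toFun)ᶜ) ∧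
    Set.InjOn δ {n | ¬ (T.σ n).isSome} := by
  classical
  obtain ⟨hcomm, huniv⟩ := hpo
  have hcomm' : ∀ p, τ₁ (m.toFun p) = δ (T.τ p) := fun p => congrFun hcomm p
  -- joint surjectivity via a cocone into ULift Prop
  have hsurj : ∀ a : ℋ, a ∈ Set.range τ₁ ∪ Set.range δ := by
    obtain ⟨η₀, hη₀, huniq⟩ := huniv (ULift.{u} Prop)
      (fun _ => ⟨True⟩) (fun _ => ⟨True⟩) rfl
    have hA : (fun _ : ℋ => (⟨True⟩ : ULift.{u} Prop)) = η₀ := huniq _ ⟨rfl, rfl⟩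
    have hB : (fun a : ℋ => (⟨a ∈ Set.range τ₁ ∪ Set.range δ⟩ : ULift.{u} Prop)) = η₀ := by
      refine huniq _ ⟨funext fun g => ?_, funext fun n => ?_⟩
      · exact congrArg ULift.up (eq_true (Or.inl ⟨g, rfl⟩))
      · exact congrArg ULift.up (eq_true (Or.inr ⟨n, rfl⟩))
    intro a
    have h := congrFun (hB.trans hA.symm) a
    exact of_eq_true (congrArg ULift.down h)
  -- the separating cocone
  let r : T.R.N → T.R.N → Prop :=
    fun n n' => ∃ p p', T.τ p = n ∧ T.τ p' = n' ∧ m.toFun p = m.toFun p'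
  let δ' : T.R.N → G.N ⊕ Quot r := fun n => Sum.inr (Quot.mk r n)
  let τ₁' : G.N → G.N ⊕ Quot r := fun g =>
    if h : ∃ p, m.toFun p = g then Sum.inr (Quot.mk r (T.τ h.choose)) else Sum.inl g
  have hco : τ₁' ∘ m.toFun = δ' ∘ T.τ := by
    funext p
    have hex : ∃ q, m.toFun q = m.toFun p := ⟨p, rfl⟩
    simp only [Function.comp_apply, τ₁', δ', dif_pos hex]
    exact congrArg Sum.inr (Quot.sound ⟨hex.choose, p, rfl, rfl, hex.choose_spec⟩)
  obtain ⟨η, ⟨hη1, hη2⟩, -⟩ := huniv (G.N ⊕ Quot r) τ₁' δ' hco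
  have ht : ∀ g ∉ Set.range m.toFun, η (τ₁ g) = Sum.inl g := by
    intro g hg
    have h := congrFun hη1 g
    simp only [Function.comp_apply, τ₁'] at h
    exact h.trans (dif_neg fun ⟨p, hp⟩ => hg ⟨p, hp⟩)
  have hdn : ∀ n, η (δ n) = Sum.inr (Quot.mk r n) := fun n => congrFun hη2 n
  -- invariant on the quotient
  let f : T.R.N → Option T.R.N := fun n => if (T.σ n).isSome then none else some n
  have hf : ∀ n n', r n n' → f n = f n' := by
    rintro n n' ⟨p, p', rfl, rfl, hpp⟩
    by_cases hpe : p = p'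
    · subst hpe; rfl
    · obtain ⟨h1, h2, -⟩ := hm p p' hpe hpp
      simp only [f, if_pos h1, if_pos h2]
  have hq : ∀ n n', Quot.mk r n = Quot.mk r n' → f n = f n' :=
    fun n n' h => congrArg (Quot.lift f hf) h
  refine ⟨?_, ?_, ?_, ?_, ?_, ?_⟩
  · ext a
    simp only [Set.mem_union, Set.mem_image, Set.mem_compl_iff, Set.mem_setOf_eq,
      Set.mem_univ, iff_true]
    rcases hsurj a with ⟨g, rfl⟩ | ⟨n, rfl⟩
    · by_cases hg : g ∈ Set.range m.toFun
      · obtain ⟨p, rfl⟩ := hg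
        rw [hcomm' p]
        by_cases hs : (T.σ (T.τ p)).isSome
        · exact Or.inr ⟨_, hs, rfl⟩
        · exact Or.inl (Or.inr ⟨_, hs, rfl⟩)
      · exact Or.inl (Or.inl ⟨g, hg, rfl⟩)
    · by_cases hs : (T.σ n).isSome
      · exact Or.inr ⟨n, hs, rfl⟩
      · exact Or.inl (Or.inr ⟨n, hs, rfl⟩)
  · ext a
    simp only [Set.mem_inter_iff, Set.mem_image, Set.mem_compl_iff, Set.mem_setOf_eq,
      Set.mem_empty_iff_false, iff_false, not_and]
    rintro ⟨g, hg, rfl⟩ ⟨n, -, hn⟩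
    have := (ht g hg).symm.trans (by rw [← hn, hdn])
    exact absurd this (by simp)
  · ext a
    simp only [Set.mem_inter_iff, Set.mem_image, Set.mem_compl_iff, Set.mem_setOf_eq,
      Set.mem_empty_iff_false, iff_false, not_and]
    rintro ⟨g, hg, rfl⟩ ⟨n, -, hn⟩
    have := (ht g hg).symm.trans (by rw [← hn, hdn])
    exact absurd this (by simp)
  · ext a
    simp only [Set.mem_inter_iff, Set.mem_image, Set.mem_setOf_eq,
      Set.mem_empty_iff_false, iff_false, not_and]
    rintro ⟨n, hn, rfl⟩ ⟨n', hn', heq⟩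
    have h1 : η (δ n') = η (δ n) := congrArg η heq
    rw [hdn, hdn] at h1
    have h2 := hq _ _ (Sum.inr.inj h1)
    simp only [f, if_pos hn', if_neg hn] at h2
    exact absurd h2 (by simp)
  · intro g hg g' hg' heq
    have h := (ht g hg).symm.trans ((congrArg η heq).trans (ht g' hg'))
    exact Sum.inl.inj h
  · intro n hn n' hn' heq
    have h1 : η (δ n) = η (δ n') := congrArg η heq
    rw [hdn, hdn] at h1
    have h2 := hq _ _ (Sum.inr.inj h1)
    simp only [f, if_neg hn, if_neg hn'] at h2
    exact Option.some.inj h2
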